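/- arXiv:0810.0862 — 2 statements merged into one kernel-verified Lean document; each statement's English description precedes it below -/
import Mathlib

section
/- The map A : C⁺(G₊₁(v)) → C⁺(G) defined by A(φ)((K,t),S) = ∑_{i∈ℤ} U^{c(i,(K,t),S)}·φ((K,t+2i+1),S) is an 𝔽[U]-equivariant chain map, i.e. δ∘A = A∘δ and A commutes with multiplication by U. -/
/-!
Common setup: the lattice cohomology complex of a weighted graph
(Némethi; J. Greene, "A surgery triangle for lattice cohomology").

A finite graph `G` with integer weights on vertices and signs on (multi-)edges is
encoded by its symmetric incidence data `M : V → V → ℤ`: for `u ≠ w` the entry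
`M u w` is the signed number of edges joining `u` and `w`, and `M u u = m(u)` is
the weight of `u`.  This is exactly the data of the intersection pairing `(·,·)`
on `L(G) = ℤ⟨E_u : u ∈ V⟩`, via `M u w = (E_u, E_w)`.
-/

noncomputable section

open Function

/-- A graph with integer vertex weights and signed multi-edges, encoded by the
symmetric pairing data `M u w = (E_u, E_w)` on `L(G)`. -/
structure WGraph (V : Type*) where
  M : V → V → ℤ
  symm : ∀ u w, M u w = M w u

variable {V : Type*} [Fintype V] [DecidableEq V]

/-- Evaluation of `K ∈ Hom(L(G), ℤ)` (recorded by its components `K u = K(E_u)`)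
on a lattice vector `x = ∑ x_u E_u ∈ L(G)`. -/
def evalK (K x : V → ℤ) : ℤ := ∑ u, K u * x u

/-- `E_T = ∑_{j ∈ T} E_j ∈ L(G)`. -/
def eVec (T : Finset V) : V → ℤ := fun u => if u ∈ T then 1 else 0

/-- Splitting a sum over `V` at a vertex `v`. -/
theorem sum_split (v : V) (f : V → ℤ) :
    ∑ u, f u = f v + ∑ u : {u : V // u ≠ v}, f u.1 := by
  rw [Fintype.sum_eq_add_sum_compl v f]
  congr 1
  exact Finset.sum_subtype _ (fun x => by simp) f

namespace WGraph

/-- The symmetric bilinear pairing `(x, y)` on `L(G)`. -/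
def pair (G : WGraph V) (x y : V → ℤ) : ℤ := ∑ u, ∑ w, G.M u w * x u * y w

/-- `K ∈ Hom(L(G),ℤ)` is characteristic: `(K,x) ≡ (x,x) (mod 2)` for all `x ∈ L(G)`. -/
def IsChar (G : WGraph V) (K : V → ℤ) : Prop :=
  ∀ x : V → ℤ, evalK K x ≡ G.pair x x [ZMOD 2]

/-- The set `Char(G)` of characteristic vectors, as a type. -/
def Ch (G : WGraph V) : Type _ := {K : V → ℤ // G.IsChar K}

/-- `K + 2x ∈ Hom(L(G),ℤ)`, for `K ∈ Hom(L(G),ℤ)` and `x ∈ L(G)` (a lattice vector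
is viewed in `Hom(L(G),ℤ)` via the pairing). -/
def chAdd (G : WGraph V) (K x : V → ℤ) : V → ℤ := fun u => K u + 2 * G.pair x (eVec {u})

/-- The difference `q(K + 2x) − q(K) = −((K,x) + (x,x))/2`, where `q(y) = −(y,y)/8`;
it is an integer whenever `K` is characteristic. -/
def qdiff (G : WGraph V) (K x : V → ℤ) : ℤ := (-(evalK K x + G.pair x x)) / 2

/-- The difference `q(K,S) − q(K) = max { q(K + 2E_T) − q(K) : T ⊆ S }`, where
`q(K,S) = max { q(K + 2 ∑_{j∈T} E_j) : T ⊆ S }`. -/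
def qrel (G : WGraph V) (K : V → ℤ) (S : Finset V) : ℤ :=
  S.powerset.sup' (Finset.powerset_nonempty S) fun T => G.qdiff K (eVec T)

/-- `G₊₁(v)`: increase the weight `m(v)` of the vertex `v` by one. -/
def bump (G : WGraph V) (v : V) : WGraph V where
  M u w := if u = v ∧ w = v then G.M u w + 1 else G.M u w
  symm u w := by
    have h := G.symm u w
    by_cases hu : u = v <;> by_cases hw : w = v <;> simp [hu, hw, h] <;>
      exact G.symm _ _

/-- `G − v`: delete the vertex `v` and all incident edges. -/
def delete (G : WGraph V) (v : V) : WGraph {u : V // u ≠ v} where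
  M u w := G.M u.1 w.1
  symm u w := G.symm u.1 w.1

theorem evalK_update (L y : V → ℤ) (v : V) (c : ℤ) :
    evalK (Function.update L v (L v + c)) y = evalK L y + c * y v := by
  unfold evalK
  have h : ∀ u, Function.update L v (L v + c) u * y u
      = L u * y u + (if u = v then c * y u else 0) := by
    intro u
    rcases eq_or_ne u v with hu | hu <;> simp [hu, Function.update] <;> ring
  simp only [h]
  rw [Finset.sum_add_distrib, Finset.sum_ite_eq' Finset.univ v (fun u => c * y u)]
  simp

theorem IsChar.chAdd {G : WGraph V} {K : V → ℤ} (h : G.IsChar K) (x : V → ℤ) :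
    G.IsChar (G.chAdd K x) := by
  intro y
  have key : evalK (G.chAdd K x) y
      = evalK K y + 2 * ∑ u, G.pair x (eVec {u}) * y u := by
    simp only [evalK, WGraph.chAdd, add_mul, mul_assoc]
    rw [Finset.sum_add_distrib, ← Finset.mul_sum]
  have hy := h y
  simp only [Int.ModEq] at hy ⊢
  rw [key]
  omega

theorem pair_bump (G : WGraph V) (v : V) (y : V → ℤ) :
    (G.bump v).pair y y = G.pair y y + y v * y v := by
  unfold pair bump
  have hu : ∀ u w : V, ((if u = v ∧ w = v then G.M u w + 1 else G.M u w) * y u * y w)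
      = G.M u w * y u * y w + (if u = v ∧ w = v then y u * y w else 0) := by
    intro u w
    rcases eq_or_ne u v with h | h <;> rcases eq_or_ne w v with h' | h' <;>
      simp [h, h'] <;> ring
  simp only [hu, Finset.sum_add_distrib]
  congr 1
  have hin : ∀ u : V, (∑ w, if u = v ∧ w = v then y u * y w else 0)
      = if u = v then y u * y v else 0 := by
    intro u
    rcases eq_or_ne u v with h | h
    · simp [h, Finset.sum_ite_eq' Finset.univ v (fun w => y v * y w)]
    · simp [h]
  rw [Finset.sum_congr rfl (fun u _ => hin u),
    Finset.sum_ite_eq' Finset.univ v (fun u => y u * y v)]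
  simp

theorem IsChar.bumpUpdate {G : WGraph V} {L : V → ℤ} (h : G.IsChar L) (v : V) (i : ℤ) :
    (G.bump v).IsChar (Function.update L v (L v + (2 * i + 1))) := by
  intro y
  have h1 := evalK_update L y v (2 * i + 1)
  have h2 := pair_bump G v y
  have hy := h y
  obtain ⟨k, hk⟩ := Int.even_mul_succ_self (y v - 1)
  have hk' : y v * y v - y v = 2 * k := by
    have h5 : (y v - 1) * (y v - 1 + 1) = y v * y v - y v := by ring
    omega
  have h3 : (2 * i + 1) * y v = 2 * (i * y v) + y v := by ring
  simp only [Int.ModEq] at hy ⊢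
  rw [h1, h2, h3]
  omega

theorem IsChar.evenUpdate {G : WGraph V} {L : V → ℤ} (h : G.IsChar L) (v : V) (k : ℤ) :
    G.IsChar (Function.update L v (L v + 2 * k)) := by
  intro y
  have h1 := evalK_update L y v (2 * k)
  have hy := h y
  have h3 : 2 * k * y v = 2 * (k * y v) := by ring
  simp only [Int.ModEq] at hy ⊢
  rw [h1, h3]
  omega

end WGraph

/-- Extension of `K ∈ Hom(L(G−v),ℤ)` to `Hom(L(G),ℤ)` by the value `t` at `v`:
the vector denoted `(K, t)`. -/
def extV (v : V) (K : {u : V // u ≠ v} → ℤ) (t : ℤ) : V → ℤ :=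
  fun u => if h : u = v then t else K ⟨u, h⟩

namespace WGraph

theorem IsChar.extChar {G : WGraph V} {v : V} {K : {u : V // u ≠ v} → ℤ}
    (h : (G.delete v).IsChar K) {t : ℤ} (ht : t ≡ G.M v v [ZMOD 2]) :
    G.IsChar (extV v K t) := by
  intro y
  have h1 : evalK (extV v K t) y = t * y v + evalK K (fun u => y u.1) := by
    unfold evalK
    rw [sum_split v (fun u => extV v K t u * y u)]
    congr 1
    · simp [extV]
    · exact Finset.sum_congr rfl fun u _ => by simp [extV, u.2]
  have h2 : G.pair y y = (G.delete v).pair (fun u => y u.1) (fun u => y u.1)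
      + G.M v v * (y v * y v)
      + 2 * ∑ u : {u : V // u ≠ v}, G.M v u.1 * y v * y u.1 := by
    have step1 : G.pair y y = (∑ w, G.M v w * y v * y w)
        + ∑ u : {u : V // u ≠ v}, ∑ w, G.M u.1 w * y u.1 * y w :=
      sum_split v (fun u => ∑ w, G.M u w * y u * y w)
    have step2 : (∑ w, G.M v w * y v * y w)
        = G.M v v * y v * y v + ∑ w : {w : V // w ≠ v}, G.M v w.1 * y v * y w.1 :=
      sum_split v _
    have step3 : ∀ u : {u : V // u ≠ v}, (∑ w, G.M u.1 w * y u.1 * y w)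
        = G.M u.1 v * y u.1 * y v + ∑ w : {w : V // w ≠ v}, G.M u.1 w.1 * y u.1 * y w.1 :=
      fun u => sum_split v _
    have step4 : (G.delete v).pair (fun u => y u.1) (fun u => y u.1)
        = ∑ u : {u : V // u ≠ v}, ∑ w : {w : V // w ≠ v}, G.M u.1 w.1 * y u.1 * y w.1 := rfl
    have hc : (∑ u : {u : V // u ≠ v}, G.M u.1 v * y u.1 * y v)
        = ∑ u : {u : V // u ≠ v}, G.M v u.1 * y v * y u.1 := by
      refine Finset.sum_congr rfl fun u _ => ?_
      rw [G.symm u.1 v]; ring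
    rw [step1, step2, Finset.sum_congr rfl (fun u _ => step3 u),
      Finset.sum_add_distrib, hc, step4]
    ring
  have hy := h (fun u => y u.1)
  obtain ⟨k, hk⟩ := Int.even_mul_succ_self (y v - 1)
  have hk' : y v * y v - y v = 2 * k := by
    have h5 : (y v - 1) * (y v - 1 + 1) = y v * y v - y v := by ring
    omega
  obtain ⟨a, ha⟩ : (2:ℤ) ∣ t - G.M v v := Int.ModEq.dvd ht.symm
  have e1 : t * y v = G.M v v * y v + 2 * (a * y v) := by
    have h6 : t = G.M v v + 2 * a := by omega
    rw [h6]; ring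
  have e2 : G.M v v * (y v * y v) = G.M v v * y v + 2 * (G.M v v * k) := by
    have h7 : y v * y v = y v + 2 * k := by omega
    rw [h7]; ring
  simp only [Int.ModEq] at hy ⊢
  rw [h1, h2, e1, e2]
  omega

variable {G : WGraph V}

/-- `K + 2x` as a characteristic vector. -/
def Ch.add (K : G.Ch) (x : V → ℤ) : G.Ch := ⟨G.chAdd K.1 x, K.2.chAdd x⟩

/-- For `K = (K', t) ∈ Char(G)`, the characteristic vector
`(K', t + 2i + 1) ∈ Char(G₊₁(v))`. -/
def Ch.bumpSh (K : G.Ch) (v : V) (i : ℤ) : (G.bump v).Ch :=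
  ⟨Function.update K.1 v (K.1 v + (2 * i + 1)), K.2.bumpUpdate v i⟩

/-- For `K = (K', t) ∈ Char(G)`, the characteristic vector `(K', t + 2k) ∈ Char(G)`. -/
def Ch.evenSh (K : G.Ch) (v : V) (k : ℤ) : G.Ch :=
  ⟨Function.update K.1 v (K.1 v + 2 * k), K.2.evenUpdate v k⟩

/-- For `K ∈ Char(G−v)`, the characteristic vector `(K, m(v) + 2i) ∈ Char(G)`. -/
def Ch.extend {v : V} (K : (G.delete v).Ch) (i : ℤ) : G.Ch :=
  ⟨extV v K.1 (G.M v v + 2 * i),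
    K.2.extChar (by show (G.M v v + 2 * i) % 2 = G.M v v % 2; omega)⟩

end WGraph

/-- `𝒯⁺₀ = 𝔽[U,U⁻¹]/(U·𝔽[U])` over `𝔽 = ℤ/2ℤ`: the coefficient at `d ∈ ℕ` records
the coefficient of `U^{−d}`. -/
def Tplus : Type := ℕ →₀ ZMod 2

instance : AddCommGroup Tplus := inferInstanceAs (AddCommGroup (ℕ →₀ ZMod 2))
instance : Module (ZMod 2) Tplus := inferInstanceAs (Module (ZMod 2) (ℕ →₀ ZMod 2))

/-- The element `U^{-m}` of `𝒯⁺₀`. -/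
def Um (m : ℕ) : Tplus := (Finsupp.single m 1 : ℕ →₀ ZMod 2)

/-- Multiplication by `U^e` on `𝒯⁺₀`: `U^e · U^{−d} = U^{−(d−e)}` (which is `0` if `d < e`). -/
def Upow (e : ℤ) (f : Tplus) : Tplus :=
  (Finsupp.comapDomain (fun d : ℕ => (d : ℤ) + e)
    (Finsupp.embDomain ⟨(Nat.cast : ℕ → ℤ), Nat.cast_injective⟩ (f : ℕ →₀ ZMod 2))
    (fun a _ b _ hab => Nat.cast_injective (add_right_cancel hab)) : ℕ →₀ ZMod 2)

theorem Upow_zero (e : ℤ) : Upow e 0 = 0 := by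
  show (Finsupp.comapDomain _ (Finsupp.embDomain _ (0 : ℕ →₀ ZMod 2)) _ : ℕ →₀ ZMod 2)
    = (0 : ℕ →₀ ZMod 2)
  ext d
  simp

/-- `C⁺(G)`: the `𝔽[U]`-module of finitely supported maps `Char(G) × 𝒫(V) → 𝒯⁺₀`. -/
abbrev Cplus (G : WGraph V) : Type _ := (G.Ch × Finset V) →₀ Tplus

/-- The action of (multiplication by) `U` on `C⁺(G)`. -/
def UC (G : WGraph V) (φ : Cplus G) : Cplus G := Finsupp.mapRange (Upow 1) (Upow_zero 1) φ

/-- `U^{−m} · (K,S)^∨`: the element of `C⁺(G)` supported at the single pair `(K,S)`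
with value `U^{−m}`. -/
def dual {G : WGraph V} (p : G.Ch × Finset V) (m : ℕ) : Cplus G :=
  Finsupp.single p (Um m)

/-- The exponent `q(K,S) − q(K, S−w)`. -/
def dExp₁ (G : WGraph V) (K : V → ℤ) (S : Finset V) (w : V) : ℤ :=
  G.qrel K S - G.qrel K (S.erase w)

/-- The exponent `q(K,S) − q(K + 2E_w, S−w)`. -/
def dExp₂ (G : WGraph V) (K : V → ℤ) (S : Finset V) (w : V) : ℤ :=
  G.qrel K S - (G.qdiff K (eVec {w}) + G.qrel (G.chAdd K (eVec {w})) (S.erase w))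

/-- `δ` is the operator on `C⁺(G)` given by
`δ(φ)(K,S) = ∑_{w∈S} [U^{q(K,S)−q(K,S−w)}·φ(K,S−w) + U^{q(K,S)−q(K+2E_w,S−w)}·φ(K+2E_w,S−w)]`. -/
def IsDelta (G : WGraph V) (δ : Cplus G → Cplus G) : Prop :=
  ∀ (φ : Cplus G) (K : G.Ch) (S : Finset V),
    δ φ (K, S) = ∑ w ∈ S,
      (Upow (dExp₁ G K.1 S w) (φ (K, S.erase w))
        + Upow (dExp₂ G K.1 S w) (φ (K.add (eVec {w}), S.erase w)))

/-- The exponent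
`c(i,(K,t),S) = [q((K,t),S) − q(K,t)] − [q'((K,t+2i+1),S) − q'(K,t+2i+1)] + i(i+1)/2`. -/
def cExp (G : WGraph V) (v : V) (i : ℤ) (K : G.Ch) (S : Finset V) : ℤ :=
  G.qrel K.1 S - (G.bump v).qrel (K.bumpSh v i).1 S + i * (i + 1) / 2

/-- `A` is the map `C⁺(G₊₁(v)) → C⁺(G)` given by
`A(φ)((K,t),S) = ∑_{i∈ℤ} U^{c(i,(K,t),S)} · φ((K,t+2i+1),S)`. -/
def IsA (G : WGraph V) (v : V) (A : Cplus (G.bump v) → Cplus G) : Prop :=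
  ∀ (φ : Cplus (G.bump v)) (K : G.Ch) (S : Finset V),
    A φ (K, S) = ∑ᶠ i : ℤ, Upow (cExp G v i K S) (φ (K.bumpSh v i, S))

/-- A subset `S ⊆ V − v` viewed as a subset of `V`. -/
def liftS (v : V) (S : Finset {u : V // u ≠ v}) : Finset V :=
  S.map ⟨Subtype.val, Subtype.val_injective⟩

/-- `B` is the map `C⁺(G) → C⁺(G−v)` given by
`B(φ)(K,S) = ∑_{i∈ℤ} φ((K, m(v)+2i), S)`. -/
def IsB (G : WGraph V) (v : V) (B : Cplus G → Cplus (G.delete v)) : Prop :=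
  ∀ (φ : Cplus G) (K : (G.delete v).Ch) (S : Finset {u : V // u ≠ v}),
    B φ (K, S) = ∑ᶠ i : ℤ, φ (K.extend i, liftS v S)

/-- `r((K,t),S) = q((K,t),S−v) − q((K,t)+2E_v,S−v)` (for `v ∈ S`). -/
def rVal (G : WGraph V) (v : V) (K : G.Ch) (S : Finset V) : ℤ :=
  G.qrel K.1 (S.erase v)
    - (G.qdiff K.1 (eVec {v}) + G.qrel (G.chAdd K.1 (eVec {v})) (S.erase v))

/-- The lattice cohomology `ℍ⁺`: the homology of the complex `(C⁺, δ)`. -/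
abbrev Hlat {G : WGraph V} (δ : Cplus G →ₗ[ZMod 2] Cplus G) : Type _ :=
  LinearMap.ker δ ⧸ (LinearMap.range δ).comap (LinearMap.ker δ).subtype

/-- `𝒟₁ ⊆ C⁺(G)`: the `𝔽`-submodule generated by the `U^{−m}·((K,t),S)^∨` with `v ∈ S`. -/
def D1 (G : WGraph V) (v : V) : Submodule (ZMod 2) (Cplus G) :=
  Submodule.span (ZMod 2)
    {χ | ∃ (K : G.Ch) (S : Finset V) (m : ℕ), v ∈ S ∧ χ = dual (K, S) m}

/-- `𝒟₂ ⊆ C⁺(G)`: the `𝔽`-submodule generated by the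
`U^{−m}·[((K,t),S)^∨ + ((K,t+2),S)^∨]` with `v ∉ S`. -/
def D2 (G : WGraph V) (v : V) : Submodule (ZMod 2) (Cplus G) :=
  Submodule.span (ZMod 2)
    {χ | ∃ (K : G.Ch) (S : Finset V) (m : ℕ), v ∉ S ∧
      χ = dual (K, S) m + dual (K.evenSh v 1, S) m}


/-! ### Auxiliary lemmas for Statement 2 -/

section AuxA

/-- View an element of `Tplus` as a finitely supported function. -/
def tF (f : Tplus) : ℕ →₀ ZMod 2 := f

/-- Evaluation of `Upow`. -/
theorem Upow_apply (e : ℤ) (f : Tplus) (d : ℕ) :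
    tF (Upow e f) d
      = if 0 ≤ (d : ℤ) + e then tF f ((d : ℤ) + e).toNat else 0 := by
  show (Finsupp.comapDomain (fun d : ℕ => (d : ℤ) + e)
    (Finsupp.embDomain ⟨(Nat.cast : ℕ → ℤ), Nat.cast_injective⟩ (tF f))
    (fun a _ b _ hab => Nat.cast_injective (add_right_cancel hab)) : ℕ →₀ ZMod 2) d = _
  show (Finsupp.embDomain ⟨(Nat.cast : ℕ → ℤ), Nat.cast_injective⟩ (tF f)) ((d : ℤ) + e) = _
  split_ifs with h
  · conv_lhs =>
      rw [show ((d : ℤ) + e) = ((((d : ℤ) + e).toNat : ℕ) : ℤ) from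
        (Int.toNat_of_nonneg h).symm]
    exact Finsupp.embDomain_apply_self _ _ _
  · refine Finsupp.embDomain_notin_range _ _ _ ?_
    rintro ⟨n, hn⟩
    simp only [Function.Embedding.coeFn_mk] at hn
    omega

theorem Tplus_ext {f g : Tplus} (h : ∀ d, tF f d = tF g d) :
    f = g := Finsupp.ext h

theorem Tplus_add_apply (f g : Tplus) (d : ℕ) :
    tF (f + g) d = tF f d + tF g d := rfl

theorem Upow_add (e : ℤ) (f g : Tplus) : Upow e (f + g) = Upow e f + Upow e g := by
  apply Tplus_ext; intro d
  rw [Tplus_add_apply, Upow_apply, Upow_apply, Upow_apply, Tplus_add_apply]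
  split_ifs <;> simp

/-- `Upow e` as an additive monoid hom. -/
def UpowHom (e : ℤ) : Tplus →+ Tplus where
  toFun := Upow e
  map_zero' := Upow_zero e
  map_add' := Upow_add e

@[simp] theorem UpowHom_apply (e : ℤ) (x : Tplus) : UpowHom e x = Upow e x := rfl

theorem Upow_Upow {a : ℤ} (ha : 0 ≤ a) (b : ℤ) (f : Tplus) :
    Upow a (Upow b f) = Upow (a + b) f := by
  apply Tplus_ext; intro d
  simp only [Upow_apply]
  rw [if_pos (by omega : (0:ℤ) ≤ (d : ℤ) + a)]
  split_ifs with h1 h2 h2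
  · congr 1; omega
  · omega
  · omega
  · rfl

theorem Upow_finsum (e : ℤ) {ι : Type*} (f : ι → Tplus) (hf : (Function.support f).Finite) :
    Upow e (∑ᶠ i, f i) = ∑ᶠ i, Upow e (f i) :=
  (UpowHom e).map_finsum hf

theorem Upow_finsetSum (e : ℤ) {ι : Type*} (f : ι → Tplus) (s : Finset ι) :
    Upow e (∑ w ∈ s, f w) = ∑ w ∈ s, Upow e (f w) :=
  map_sum (UpowHom e) f s

theorem support_add_fin {ι : Type*} {M : Type*} [AddCommMonoid M] {f g : ι → M}
    (hf : (Function.support f).Finite) (hg : (Function.support g).Finite) :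
    (Function.support fun i => f i + g i).Finite := by
  refine (hf.union hg).subset fun i hi => ?_
  by_contra hni
  simp only [Set.mem_union, Function.mem_support, not_or, not_not] at hni
  exact hi (by simp [Function.mem_support, hni.1, hni.2])

variable {V : Type*} [Fintype V] [DecidableEq V]

theorem eVec_apply (T : Finset V) (u : V) : eVec T u = if u ∈ T then 1 else 0 := rfl

theorem evalK_single (K : V → ℤ) (w : V) : evalK K (eVec {w}) = K w := by
  simp only [evalK, eVec, Finset.mem_singleton, mul_ite, mul_one, mul_zero]
  rw [Finset.sum_ite_eq' Finset.univ w K]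
  simp

theorem pair_eVec_right (G : WGraph V) (x : V → ℤ) (u : V) :
    G.pair x (eVec {u}) = ∑ a, G.M a u * x a := by
  unfold WGraph.pair
  refine Finset.sum_congr rfl fun a _ => ?_
  simp only [eVec, Finset.mem_singleton, mul_ite, mul_one, mul_zero]
  rw [Finset.sum_ite_eq' Finset.univ u (fun b => G.M a b * x a)]
  simp

theorem pair_single (G : WGraph V) (w u : V) : G.pair (eVec {w}) (eVec {u}) = G.M w u := by
  rw [pair_eVec_right]
  simp only [eVec, Finset.mem_singleton, mul_ite, mul_one, mul_zero]
  rw [Finset.sum_ite_eq' Finset.univ w (fun a => G.M a u)]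
  simp

theorem evalK_add_right (K x y : V → ℤ) : evalK K (x + y) = evalK K x + evalK K y := by
  simp only [evalK, Pi.add_apply, mul_add, Finset.sum_add_distrib]

theorem wpair_comm (G : WGraph V) (x y : V → ℤ) : G.pair x y = G.pair y x := by
  unfold WGraph.pair
  rw [Finset.sum_comm]
  exact Finset.sum_congr rfl fun u _ => Finset.sum_congr rfl fun w _ => by
    rw [G.symm]; ring

theorem wpair_add_right (G : WGraph V) (x y z : V → ℤ) :
    G.pair x (y + z) = G.pair x y + G.pair x z := by
  simp only [WGraph.pair, Pi.add_apply, mul_add, Finset.sum_add_distrib]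

theorem wpair_add_left (G : WGraph V) (x y z : V → ℤ) :
    G.pair (x + y) z = G.pair x z + G.pair y z := by
  rw [wpair_comm, wpair_add_right, wpair_comm G z x, wpair_comm G z y]

theorem evalK_chAdd (G : WGraph V) (K x y : V → ℤ) :
    evalK (G.chAdd K x) y = evalK K y + 2 * G.pair x y := by
  simp only [evalK, WGraph.chAdd, add_mul, Finset.sum_add_distrib]
  congr 1
  have h1 : ∀ u, 2 * G.pair x (eVec {u}) * y u = ∑ a, 2 * (G.M a u * x a * y u) := by
    intro u
    rw [pair_eVec_right, Finset.mul_sum, Finset.sum_mul]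
    exact Finset.sum_congr rfl fun a _ => by ring
  rw [Finset.sum_congr rfl fun u _ => h1 u]
  unfold WGraph.pair
  rw [Finset.mul_sum, Finset.sum_comm]
  refine Finset.sum_congr rfl fun u _ => ?_
  rw [Finset.mul_sum]

theorem char_num_even {G : WGraph V} {K : V → ℤ} (hK : G.IsChar K) (x : V → ℤ) :
    2 ∣ evalK K x + G.pair x x := by
  have := hK x
  simp only [Int.ModEq] at this
  omega

theorem qdiff_add {G : WGraph V} {K : V → ℤ} (hK : G.IsChar K) (x y : V → ℤ) :
    G.qdiff K (x + y) = G.qdiff K x + G.qdiff (G.chAdd K x) y := by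
  have h1 := char_num_even hK x
  have h2 := char_num_even (hK.chAdd x) y
  have h3 := char_num_even hK (x + y)
  have key : evalK K (x + y) + G.pair (x + y) (x + y)
      = (evalK K x + G.pair x x) + (evalK (G.chAdd K x) y + G.pair y y) := by
    rw [evalK_add_right, wpair_add_left, wpair_add_right, wpair_add_right, evalK_chAdd,
      wpair_comm G y x]
    ring
  unfold WGraph.qdiff
  omega

theorem eVec_empty : eVec (∅ : Finset V) = 0 := funext fun u => by simp [eVec]

theorem qdiff_zero' (G : WGraph V) (K : V → ℤ) : G.qdiff K 0 = 0 := by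
  have h1 : evalK K 0 = 0 := by simp [evalK]
  have h2 : G.pair 0 0 = 0 := by simp [WGraph.pair]
  unfold WGraph.qdiff
  rw [h1, h2]
  simp

theorem qdiff_le_qrel (G : WGraph V) (K : V → ℤ) {T S : Finset V} (h : T ⊆ S) :
    G.qdiff K (eVec T) ≤ G.qrel K S := by
  unfold WGraph.qrel
  exact Finset.le_sup' (fun T => G.qdiff K (eVec T)) (Finset.mem_powerset.2 h)

theorem qrel_mono (G : WGraph V) (K : V → ℤ) {S' S : Finset V} (h : S' ⊆ S) :
    G.qrel K S' ≤ G.qrel K S := by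
  conv_lhs => unfold WGraph.qrel
  exact Finset.sup'_le _ _ fun T hT => qdiff_le_qrel G K ((Finset.mem_powerset.1 hT).trans h)

theorem dExp₁_nonneg (G : WGraph V) (K : V → ℤ) (S : Finset V) (w : V) :
    0 ≤ dExp₁ G K S w := by
  unfold dExp₁
  have := qrel_mono G K (Finset.erase_subset w S)
  omega

theorem dExp₂_nonneg {G : WGraph V} {K : V → ℤ} (hK : G.IsChar K) {S : Finset V} {w : V}
    (hw : w ∈ S) : 0 ≤ dExp₂ G K S w := by
  unfold dExp₂
  have key : G.qrel (G.chAdd K (eVec {w})) (S.erase w)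
      ≤ G.qrel K S - G.qdiff K (eVec {w}) := by
    conv_lhs => unfold WGraph.qrel
    apply Finset.sup'_le
    intro T hT
    rw [Finset.mem_powerset] at hT
    have hwT : w ∉ T := fun h => (Finset.mem_erase.1 (hT h)).1 rfl
    have hins : insert w T ⊆ S :=
      Finset.insert_subset hw (hT.trans (Finset.erase_subset _ _))
    have hq := qdiff_add hK (eVec {w}) (eVec T)
    have hvec : eVec {w} + eVec T = eVec (insert w T) := by
      funext u
      simp only [Pi.add_apply, eVec, Finset.mem_singleton, Finset.mem_insert]
      by_cases h : u = w
      · subst h; simp [hwT]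
      · simp [h]
    rw [hvec] at hq
    have := qdiff_le_qrel G K hins
    omega
  omega

theorem bumpSh_val {G : WGraph V} (K : G.Ch) (v : V) (i : ℤ) :
    (K.bumpSh v i).1 = Function.update K.1 v (K.1 v + (2 * i + 1)) := rfl

theorem add_val {G : WGraph V} (K : G.Ch) (x : V → ℤ) :
    (K.add x).1 = G.chAdd K.1 x := rfl

theorem qdiff_bumpSh {G : WGraph V} {K : V → ℤ} (hK : G.IsChar K) (v : V) (i : ℤ)
    (T : Finset V) :
    (G.bump v).qdiff (Function.update K v (K v + (2 * i + 1))) (eVec T)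
      = G.qdiff K (eVec T) - (if v ∈ T then i + 1 else 0) := by
  have h1 := WGraph.evalK_update K (eVec T) v (2 * i + 1)
  have h2 := G.pair_bump v (eVec T)
  have h3 := char_num_even hK (eVec T)
  have hv : eVec T v = if v ∈ T then 1 else 0 := rfl
  unfold WGraph.qdiff
  rw [h1, h2, hv]
  by_cases hvT : v ∈ T <;>
    simp only [hvT, if_true, if_false, mul_one, mul_zero] <;> omega

theorem qrel_bumpSh {G : WGraph V} {K : V → ℤ} (hK : G.IsChar K) (v : V) (i : ℤ)
    (S : Finset V) :
    (G.bump v).qrel (Function.update K v (K v + (2 * i + 1))) S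
      = S.powerset.sup' (Finset.powerset_nonempty S)
          (fun T => G.qdiff K (eVec T) - (if v ∈ T then i + 1 else 0)) := by
  unfold WGraph.qrel
  exact Finset.sup'_congr _ rfl fun T _ => qdiff_bumpSh hK v i T

theorem tri_bounds (i : ℤ) : 0 ≤ i * (i + 1) / 2 ∧ -(i + 1) ≤ i * (i + 1) / 2 := by
  have ha : 0 ≤ i * (i + 1) := by
    rcases le_or_gt 0 i with h | h
    · exact mul_nonneg h (by omega)
    · exact mul_nonneg_of_nonpos_of_nonpos (by omega) (by omega)
  have hb : 0 ≤ (i + 1) * (i + 2) := by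
    rcases le_or_gt 0 (i + 1) with h | h
    · exact mul_nonneg h (by omega)
    · exact mul_nonneg_of_nonpos_of_nonpos (by omega) (by omega)
  obtain ⟨k, hk⟩ := Int.even_mul_succ_self i
  have hc : (i + 1) * (i + 2) = i * (i + 1) + 2 * (i + 1) := by ring
  rw [hc, hk] at hb
  rw [hk] at ha ⊢
  omega

theorem tri_succ (i : ℤ) : (i + 1) * (i + 1 + 1) / 2 = i * (i + 1) / 2 + (i + 1) := by
  obtain ⟨k, hk⟩ := Int.even_mul_succ_self i
  have hc : (i + 1) * (i + 1 + 1) = i * (i + 1) + 2 * (i + 1) := by ring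
  rw [hc, hk]
  omega

theorem cExp_nonneg (G : WGraph V) (v : V) (i : ℤ) (K : G.Ch) (S : Finset V) :
    0 ≤ cExp G v i K S := by
  obtain ⟨h1, h2⟩ := tri_bounds i
  unfold cExp
  rw [bumpSh_val, qrel_bumpSh K.2 v i S]
  have key : S.powerset.sup' (Finset.powerset_nonempty S)
      (fun T => G.qdiff K.1 (eVec T) - (if v ∈ T then i + 1 else 0))
        ≤ G.qrel K.1 S + i * (i + 1) / 2 := by
    apply Finset.sup'_le
    intro T hT
    have hq := qdiff_le_qrel G K.1 (Finset.mem_powerset.1 hT)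
    by_cases hv : v ∈ T <;> simp only [hv, if_true, if_false] <;> omega
  omega

theorem bump_M_apply (G : WGraph V) (v u w : V) :
    (G.bump v).M u w = if u = v ∧ w = v then G.M u w + 1 else G.M u w := rfl

theorem chAdd_bump_eq (G : WGraph V) (v : V) {w : V} (hw : w ≠ v) (K : G.Ch) (i : ℤ) :
    ((K.bumpSh v i).add (eVec {w})) = ((K.add (eVec {w})).bumpSh v i) := by
  apply Subtype.ext
  rw [add_val, bumpSh_val, bumpSh_val, add_val]
  funext u
  rcases eq_or_ne u v with h | h
  · subst h
    simp only [WGraph.chAdd, pair_single, bump_M_apply, hw, false_and, if_false,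
      Function.update_self]
    ring
  · simp only [WGraph.chAdd, pair_single, bump_M_apply, hw, false_and, if_false,
      Function.update_of_ne h]

theorem chAdd_bump_v (G : WGraph V) (v : V) (K : G.Ch) (i : ℤ) :
    ((K.bumpSh v i).add (eVec {v})) = ((K.add (eVec {v})).bumpSh v (i + 1)) := by
  apply Subtype.ext
  rw [add_val, bumpSh_val, bumpSh_val, add_val]
  funext u
  rcases eq_or_ne u v with h | h
  · subst h
    simp only [WGraph.chAdd, pair_single, bump_M_apply, Function.update_self,
      eq_self_iff_true, and_self, if_true, true_and]
    ring
  · simp only [WGraph.chAdd, pair_single, bump_M_apply, Function.update_of_ne h,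
      eq_self_iff_true, true_and, if_neg h]

theorem qdiff_bump_single (G : WGraph V) (v : V) {w : V} (hw : w ≠ v) (K : G.Ch) (i : ℤ) :
    (G.bump v).qdiff (K.bumpSh v i).1 (eVec {w}) = G.qdiff K.1 (eVec {w}) := by
  rw [bumpSh_val, qdiff_bumpSh K.2 v i {w}]
  simp [Finset.mem_singleton, (Ne.symm hw)]

theorem qdiff_bump_vsingle (G : WGraph V) (v : V) (K : G.Ch) (i : ℤ) :
    (G.bump v).qdiff (K.bumpSh v i).1 (eVec {v}) = G.qdiff K.1 (eVec {v}) - (i + 1) := by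
  rw [bumpSh_val, qdiff_bumpSh K.2 v i {v}]
  simp

/-- Exponent identity for the `dExp₁` terms. -/
theorem expId₁ (G : WGraph V) (v : V) (K : G.Ch) (S : Finset V) (w : V) (i : ℤ) :
    dExp₁ G K.1 S w + cExp G v i K (S.erase w)
      = cExp G v i K S + dExp₁ (G.bump v) (K.bumpSh v i).1 S w := by
  unfold dExp₁ cExp
  set t := i * (i + 1) / 2
  omega

/-- Exponent identity for the `dExp₂` terms, `w ≠ v`. -/
theorem expId₂ (G : WGraph V) (v : V) {w : V} (hw : w ≠ v) (K : G.Ch) (S : Finset V)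
    (i : ℤ) :
    dExp₂ G K.1 S w + cExp G v i (K.add (eVec {w})) (S.erase w)
      = cExp G v i K S + dExp₂ (G.bump v) (K.bumpSh v i).1 S w := by
  have hch := congrArg Subtype.val (chAdd_bump_eq G v hw K i)
  rw [add_val] at hch
  unfold dExp₂ cExp
  rw [qdiff_bump_single G v hw K i, hch, add_val]
  set t := i * (i + 1) / 2
  omega

/-- Exponent identity for the `dExp₂` terms, `w = v`. -/
theorem expId₃ (G : WGraph V) (v : V) (K : G.Ch) (S : Finset V) (i : ℤ) :
    dExp₂ G K.1 S v + cExp G v (i + 1) (K.add (eVec {v})) (S.erase v)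
      = cExp G v i K S + dExp₂ (G.bump v) (K.bumpSh v i).1 S v := by
  have hch := congrArg Subtype.val (chAdd_bump_v G v K i)
  rw [add_val] at hch
  unfold dExp₂ cExp
  rw [qdiff_bump_vsingle G v K i, hch, add_val, tri_succ]
  set t := i * (i + 1) / 2
  omega

theorem inj_aux {α : Type*} (F : ℤ → α) (g : α → ℤ) (a : ℤ)
    (h : ∀ i, g (F i) = a + 2 * i) : Function.Injective F := fun i j hij => by
  have hi := h i
  rw [hij, h j] at hi
  omega

theorem bumpSh_injective {G : WGraph V} (K : G.Ch) (v : V) :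
    Function.Injective (fun i => K.bumpSh v i) := by
  apply inj_aux _ (fun L : (G.bump v).Ch => L.1 v) (K.1 v + 1)
  intro i
  simp only [bumpSh_val, Function.update_self]
  ring

theorem support_fin {G : WGraph V} (v : V) (φ : Cplus (G.bump v))
    (F : ℤ → (G.bump v).Ch × Finset V) (hF : Function.Injective F)
    (g : ℤ → Tplus → Tplus) (hg : ∀ i, g i 0 = 0) :
    (Function.support fun i => g i (φ (F i))).Finite := by
  refine (φ.support.finite_toSet.preimage hF.injOn).subset fun i hi => ?_
  simp only [Function.mem_support] at hi
  simp only [Set.mem_preimage, Finset.mem_coe, Finsupp.mem_support_iff]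
  intro h0
  exact hi (by rw [h0]; exact hg i)

theorem fin_bump {G : WGraph V} (v : V) (φ : Cplus (G.bump v)) (K' : G.Ch) (S' : Finset V)
    (e : ℤ → ℤ) :
    (Function.support fun i => Upow (e i) (φ (K'.bumpSh v i, S'))).Finite :=
  support_fin v φ _
    (fun i j h => bumpSh_injective K' v (congrArg Prod.fst h))
    (fun i => Upow (e i)) (fun i => Upow_zero _)

theorem fin_bump_add {G : WGraph V} (v : V) (φ : Cplus (G.bump v)) (K' : G.Ch) (w : V)
    (S' : Finset V) (e : ℤ → ℤ) :
    (Function.support fun i =>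
      Upow (e i) (φ ((K'.bumpSh v i).add (eVec {w}), S'))).Finite := by
  refine support_fin v φ _ ?_ (fun i => Upow (e i)) (fun i => Upow_zero _)
  apply inj_aux _ (fun p : (G.bump v).Ch × Finset V => p.1.1 v)
    (K'.1 v + 1 + 2 * (G.bump v).pair (eVec {w}) (eVec {v}))
  intro i
  show ((K'.bumpSh v i).add (eVec {w})).1 v = _
  rw [add_val]
  show (K'.bumpSh v i).1 v + 2 * (G.bump v).pair (eVec {w}) (eVec {v}) = _
  rw [bumpSh_val, Function.update_self]
  ring

end AuxA

/-- The map `A : C⁺(G₊₁(v)) → C⁺(G)` defined by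
`A(φ)((K,t),S) = ∑_{i∈ℤ} U^{c(i,(K,t),S)}·φ((K,t+2i+1),S)` is an `𝔽[U]`-equivariant chain
map, i.e. `δ∘A = A∘δ` and `A` commutes with multiplication by `U`. -/
theorem A_equivariant_chain_map (G : WGraph V) (v : V)
    (δG : Cplus G → Cplus G) (hδG : IsDelta G δG)
    (δG' : Cplus (G.bump v) → Cplus (G.bump v)) (hδG' : IsDelta (G.bump v) δG')
    (A : Cplus (G.bump v) → Cplus G) (hA : IsA G v A) :
    IsLinearMap (ZMod 2) A ∧ (∀ φ, A (UC (G.bump v) φ) = UC G (A φ)) ∧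
      (∀ φ, δG (A φ) = A (δG' φ)) := by
  classical
  -- `A 0 = 0`
  have hA0 : A 0 = 0 := by
    apply Finsupp.ext
    rintro ⟨K, S⟩
    rw [hA]
    simp only [Finsupp.coe_zero, Pi.zero_apply, Upow_zero]
    rw [finsum_zero]
  -- additivity
  have hAadd : ∀ φ ψ, A (φ + ψ) = A φ + A ψ := by
    intro φ ψ
    apply Finsupp.ext
    rintro ⟨K, S⟩
    rw [Finsupp.add_apply, hA, hA, hA,
      ← finsum_add_distrib (fin_bump v φ K S _) (fin_bump v ψ K S _)]
    apply finsum_congr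
    intro i
    rw [Finsupp.add_apply, Upow_add]
  -- scalar multiplication
  have hAsmul : ∀ (c : ZMod 2) (φ : Cplus (G.bump v)), A (c • φ) = c • A φ := by
    intro c φ
    have hc : c = 0 ∨ c = 1 := by revert c; decide
    rcases hc with h | h <;> subst h
    · rw [zero_smul, zero_smul, hA0]
    · rw [one_smul, one_smul]
  -- `U`-equivariance
  have hU : ∀ φ, A (UC (G.bump v) φ) = UC G (A φ) := by
    intro φ
    apply Finsupp.ext
    rintro ⟨K, S⟩
    have hRHS : (UC G (A φ)) (K, S) = Upow 1 (A φ (K, S)) := Finsupp.mapRange_apply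
    rw [hA, hRHS, hA, Upow_finsum 1 _ (fin_bump v φ K S _)]
    apply finsum_congr
    intro i
    have hUCφ : (UC (G.bump v) φ) (K.bumpSh v i, S) = Upow 1 (φ (K.bumpSh v i, S)) :=
      Finsupp.mapRange_apply
    rw [hUCφ, Upow_Upow (cExp_nonneg G v i K S) 1, Upow_Upow (by norm_num : (0:ℤ) ≤ 1) _,
      add_comm]
  -- chain map
  have hchain : ∀ φ, δG (A φ) = A (δG' φ) := by
    intro φ
    apply Finsupp.ext
    rintro ⟨K, S⟩
    -- finite-support facts
    have fin₁ : ∀ (K' : G.Ch) (S' : Finset V) (e : ℤ → ℤ),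
        (Function.support fun i => Upow (e i) (φ (K'.bumpSh v i, S'))).Finite :=
      fun K' S' e => fin_bump v φ K' S' e
    have fin₂ : ∀ (K' : G.Ch) (w : V) (S' : Finset V) (e : ℤ → ℤ),
        (Function.support fun i =>
          Upow (e i) (φ ((K'.bumpSh v i).add (eVec {w}), S'))).Finite :=
      fun K' w S' e => fin_bump_add v φ K' w S' e
    -- middle canonical expression
    trans (∑ w ∈ S,
      ((∑ᶠ i : ℤ, Upow (dExp₁ G K.1 S w + cExp G v i K (S.erase w))
          (φ (K.bumpSh v i, S.erase w)))
        + (∑ᶠ i : ℤ, Upow (dExp₂ G K.1 S w + cExp G v i (K.add (eVec {w})) (S.erase w))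
          (φ ((K.add (eVec {w})).bumpSh v i, S.erase w)))))
    · -- left-hand side equals the canonical expression
      rw [hδG]
      refine Finset.sum_congr rfl fun w hw => ?_
      rw [hA, hA,
        Upow_finsum _ _ (fin₁ K (S.erase w) (fun i => cExp G v i K (S.erase w))),
        Upow_finsum _ _ (fin₁ (K.add (eVec {w})) (S.erase w)
          (fun i => cExp G v i (K.add (eVec {w})) (S.erase w)))]
      congr 1
      · exact finsum_congr fun i => Upow_Upow (dExp₁_nonneg G K.1 S w) _ _
      · exact finsum_congr fun i => Upow_Upow (dExp₂_nonneg K.2 hw) _ _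
    · -- the canonical expression equals the right-hand side
      rw [hA]
      have step1 : ∀ i : ℤ, Upow (cExp G v i K S) ((δG' φ) (K.bumpSh v i, S))
          = ∑ w ∈ S,
            (Upow (cExp G v i K S + dExp₁ (G.bump v) (K.bumpSh v i).1 S w)
                (φ (K.bumpSh v i, S.erase w))
              + Upow (cExp G v i K S + dExp₂ (G.bump v) (K.bumpSh v i).1 S w)
                (φ ((K.bumpSh v i).add (eVec {w}), S.erase w))) := by
        intro i
        rw [hδG', Upow_finsetSum]
        refine Finset.sum_congr rfl fun w hw => ?_
        rw [Upow_add, Upow_Upow (cExp_nonneg G v i K S), Upow_Upow (cExp_nonneg G v i K S)]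
      rw [finsum_congr step1]
      rw [finsum_sum_comm S
        (fun (i : ℤ) (w : V) =>
          Upow (cExp G v i K S + dExp₁ (G.bump v) (K.bumpSh v i).1 S w)
              (φ (K.bumpSh v i, S.erase w))
            + Upow (cExp G v i K S + dExp₂ (G.bump v) (K.bumpSh v i).1 S w)
              (φ ((K.bumpSh v i).add (eVec {w}), S.erase w)))
        (fun w _ => support_add_fin
          (fin₁ K (S.erase w) (fun i => cExp G v i K S + dExp₁ (G.bump v) (K.bumpSh v i).1 S w))
          (fin₂ K w (S.erase w)
            (fun i => cExp G v i K S + dExp₂ (G.bump v) (K.bumpSh v i).1 S w)))]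
      refine Finset.sum_congr rfl fun w hw => ?_
      rw [finsum_add_distrib
        (fin₁ K (S.erase w) (fun i => cExp G v i K S + dExp₁ (G.bump v) (K.bumpSh v i).1 S w))
        (fin₂ K w (S.erase w)
          (fun i => cExp G v i K S + dExp₂ (G.bump v) (K.bumpSh v i).1 S w))]
      congr 1
      · exact finsum_congr fun i =>
          congrArg (fun e => Upow e (φ (K.bumpSh v i, S.erase w))) (expId₁ G v K S w i)
      · by_cases hwv : w = v
        · subst hwv
          have key : ∀ i : ℤ,
              Upow (cExp G w i K S + dExp₂ (G.bump w) (K.bumpSh w i).1 S w)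
                (φ ((K.bumpSh w i).add (eVec {w}), S.erase w))
              = Upow (dExp₂ G K.1 S w + cExp G w (i + 1) (K.add (eVec {w})) (S.erase w))
                (φ ((K.add (eVec {w})).bumpSh w (i + 1), S.erase w)) := by
            intro i
            rw [chAdd_bump_v G w K i]
            exact congrArg
              (fun e => Upow e (φ ((K.add (eVec {w})).bumpSh w (i + 1), S.erase w)))
              (expId₃ G w K S i).symm
          rw [finsum_congr key]
          have reindex : ∀ g : ℤ → Tplus, ∑ᶠ i : ℤ, g (i + 1) = ∑ᶠ i : ℤ, g i := by
            intro g
            have h := finsum_comp_equiv (Equiv.addRight (1 : ℤ)) (f := g)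
            simpa using h
          exact (reindex (fun j =>
            Upow (dExp₂ G K.1 S w + cExp G w j (K.add (eVec {w})) (S.erase w))
              (φ ((K.add (eVec {w})).bumpSh w j, S.erase w)))).symm
        · apply finsum_congr
          intro i
          rw [chAdd_bump_eq G v hwv K i]
          exact congrArg
            (fun e => Upow e (φ ((K.add (eVec {w})).bumpSh v i, S.erase w)))
            (expId₂ G v hwv K S i)
  exact ⟨⟨hAadd, hAsmul⟩, hU, hchain⟩

end
end

section
/- If v ∈ S and r = r((K,t),S), then c(i,(K,t),S) equals: i(i+1)/2 if r ≥ max{0, −(i+1)}; (i+1)(i+2)/2 if r ≤ min{0, −(i+1)}; (i+1)(i+2)/2 + r if 0 ≤ r ≤ −(i+1); and i(i+1)/2 − r if −(i+1) ≤ r ≤ 0. -/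
/-!
Common setup: the lattice cohomology complex of a weighted graph
(Némethi; J. Greene, "A surgery triangle for lattice cohomology").

A finite graph `G` with integer weights on vertices and signs on (multi-)edges is
encoded by its symmetric incidence data `M : V → V → ℤ`: for `u ≠ w` the entry
`M u w` is the signed number of edges joining `u` and `w`, and `M u u = m(u)` is
the weight of `u`.  This is exactly the data of the intersection pairing `(·,·)`
on `L(G) = ℤ⟨E_u : u ∈ V⟩`, via `M u w = (E_u, E_w)`.
-/

noncomputable section

open Function

variable {V : Type*} [Fintype V] [DecidableEq V]

section AuxLemmas

variable {V : Type*} [Fintype V] [DecidableEq V]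

namespace WGraph

theorem evalK_add' (K x y : V → ℤ) :
    evalK K (fun u => x u + y u) = evalK K x + evalK K y := by
  simp [evalK, mul_add, Finset.sum_add_distrib]

theorem pair_add_left (G : WGraph V) (x y z : V → ℤ) :
    G.pair (fun u => x u + y u) z = G.pair x z + G.pair y z := by
  unfold pair
  rw [← Finset.sum_add_distrib]
  refine Finset.sum_congr rfl fun u _ => ?_
  rw [← Finset.sum_add_distrib]
  exact Finset.sum_congr rfl fun w _ => by ring

theorem pair_comm (G : WGraph V) (x y : V → ℤ) : G.pair x y = G.pair y x := by
  unfold pair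
  rw [Finset.sum_comm]
  refine Finset.sum_congr rfl fun u _ => Finset.sum_congr rfl fun w _ => ?_
  rw [G.symm w u]; ring

theorem pair_add_right (G : WGraph V) (x y z : V → ℤ) :
    G.pair z (fun u => x u + y u) = G.pair z x + G.pair z y := by
  rw [G.pair_comm z, G.pair_add_left, G.pair_comm x z, G.pair_comm y z]

theorem evalK_chAdd (G : WGraph V) (K e x : V → ℤ) :
    evalK (G.chAdd K e) x = evalK K x + 2 * G.pair e x := by
  unfold evalK chAdd
  have h1 : ∀ u, (K u + 2 * G.pair e (eVec {u})) * x u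
      = K u * x u + 2 * (G.pair e (eVec {u}) * x u) := fun u => by ring
  simp only [h1]
  rw [Finset.sum_add_distrib, ← Finset.mul_sum]
  congr 1
  have h2 : ∀ u : V, G.pair e (eVec {u}) * x u = ∑ a, G.M a u * e a * x u := by
    intro u
    unfold pair
    rw [Finset.sum_mul]
    refine Finset.sum_congr rfl fun a _ => ?_
    have h3 : ∀ w, G.M a w * e a * eVec {u} w = if w = u then G.M a u * e a else 0 := by
      intro w
      rcases eq_or_ne w u with h | h <;> simp [eVec, h]
    rw [Finset.sum_congr rfl fun w _ => h3 w, Finset.sum_ite_eq' Finset.univ u]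
    simp
  rw [Finset.sum_congr rfl fun u _ => h2 u]
  unfold pair
  rw [Finset.sum_comm]

theorem IsChar.even_num {G : WGraph V} {K : V → ℤ} (h : G.IsChar K) (x : V → ℤ) :
    2 ∣ (evalK K x + G.pair x x) := by
  have := h x
  simp only [Int.ModEq] at this
  omega

/-- Splitting `E_{insert v T} = E_T + E_v` for `v ∉ T`. -/
theorem eVec_insert {v : V} {T : Finset V} (hv : v ∉ T) :
    eVec (insert v T) = fun u => eVec T u + eVec ({v} : Finset V) u := by
  funext u
  rcases eq_or_ne u v with h | h
  · subst h; simp [eVec, hv]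
  · simp [eVec, h]

/-- `qdiff` splits off the vertex `v`: `q(K+2E_{T∪v}) − q(K) =
(q(K+2E_v) − q(K)) + (q(K+2E_v+2E_T) − q(K+2E_v))`. -/
theorem qdiff_insert (G : WGraph V) {K : V → ℤ} (hK : G.IsChar K) {v : V} {T : Finset V}
    (hv : v ∉ T) :
    G.qdiff K (eVec (insert v T)) =
      G.qdiff K (eVec ({v} : Finset V))
        + G.qdiff (G.chAdd K (eVec ({v} : Finset V))) (eVec T) := by
  set e := eVec ({v} : Finset V)
  set x := eVec T
  have hsplit : eVec (insert v T) = fun u => x u + e u := eVec_insert hv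
  unfold qdiff
  rw [hsplit]
  have hN : evalK K (fun u => x u + e u) + G.pair (fun u => x u + e u) (fun u => x u + e u)
      = (evalK K e + G.pair e e)
        + (evalK (G.chAdd K e) x + G.pair x x) := by
    rw [evalK_add', G.pair_add_left, G.pair_add_right, G.pair_add_right,
      G.evalK_chAdd, G.pair_comm x e]
    ring
  obtain ⟨a, ha⟩ := hK.even_num e
  obtain ⟨b, hb⟩ := (hK.chAdd e).even_num x
  omega

/-- For `v ∉ T`, `qdiff` is unchanged by bumping at `v` and shifting `t`. -/
theorem qdiff_bump_notMem (G : WGraph V) (K : V → ℤ) (v : V) (i : ℤ) {T : Finset V}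
    (hv : v ∉ T) :
    (G.bump v).qdiff (Function.update K v (K v + (2 * i + 1))) (eVec T)
      = G.qdiff K (eVec T) := by
  unfold qdiff
  have h1 := evalK_update K (eVec T) v (2 * i + 1)
  have h2 := G.pair_bump v (eVec T)
  have h3 : eVec T v = 0 := by simp [eVec, hv]
  rw [h1, h2, h3]
  ring_nf

/-- For `v ∈ T`, `qdiff` drops by `i + 1` after bumping at `v` and shifting `t`. -/
theorem qdiff_bump_mem (G : WGraph V) {K : V → ℤ} (hK : G.IsChar K) (v : V) (i : ℤ)
    {T : Finset V} (hv : v ∈ T) :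
    (G.bump v).qdiff (Function.update K v (K v + (2 * i + 1))) (eVec T)
      = G.qdiff K (eVec T) - (i + 1) := by
  unfold qdiff
  have h1 := evalK_update K (eVec T) v (2 * i + 1)
  have h2 := G.pair_bump v (eVec T)
  have h3 : eVec T v = 1 := by simp [eVec, hv]
  obtain ⟨a, ha⟩ := hK.even_num (eVec T)
  rw [h1, h2, h3]
  omega

theorem max_shift (c d x y : ℤ) : c + max x y - d = max (c + x - d) (c + y - d) := by
  rcases le_total x y with h | h
  · rw [max_eq_right h, max_eq_right (by omega)]
  · rw [max_eq_left h, max_eq_left (by omega)]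

theorem sup'_shift {β : Type*} {t : Finset β} (ht : t.Nonempty) (f : β → ℤ) (c d : ℤ) :
    t.sup' ht (fun T => c + f T - d) = c + t.sup' ht f - d := by
  rw [show (fun T => c + f T - d) = (fun z => c + z - d) ∘ f from rfl,
    ← Finset.comp_sup'_eq_sup'_comp ht (fun z => c + z - d)
      (fun x y => by exact max_shift c d x y)]

theorem sup'_add_const {β : Type*} {t : Finset β} (ht : t.Nonempty) (f : β → ℤ) (c : ℤ) :
    t.sup' ht (fun T => c + f T) = c + t.sup' ht f := by
  rw [show (fun T => c + f T) = (fun z => c + z) ∘ f from rfl,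
    ← Finset.comp_sup'_eq_sup'_comp ht (fun z => c + z)
      (fun x y => by exact (max_add_add_left c x y).symm)]

/-- Over `S = insert v s`, `q(K,S) − q(K)` is the max of the contributions of the
subsets avoiding `v` and those containing `v`. -/
theorem qrel_insert (G : WGraph V) {K : V → ℤ} (hK : G.IsChar K) {v : V} {s : Finset V}
    (hv : v ∉ s) :
    G.qrel K (insert v s) =
      max (G.qrel K s)
        (G.qdiff K (eVec ({v} : Finset V))
          + G.qrel (G.chAdd K (eVec ({v} : Finset V))) s) := by
  unfold qrel
  have hps : (insert v s).powerset = s.powerset ∪ s.powerset.image (insert v) :=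
    Finset.powerset_insert s v
  have h1 : s.powerset.Nonempty := Finset.powerset_nonempty s
  have h2 : (s.powerset.image (insert v)).Nonempty := h1.image _
  have key : ∀ T ∈ s.powerset,
      ((fun T => G.qdiff K (eVec T)) ∘ insert v) T
      = G.qdiff K (eVec ({v} : Finset V))
          + G.qdiff (G.chAdd K (eVec ({v} : Finset V))) (eVec T) := by
    intro T hT
    rw [Function.comp_apply]
    exact G.qdiff_insert hK (fun hvt => hv ((Finset.mem_powerset.mp hT) hvt))
  rw [Finset.sup'_congr _ hps (fun _ _ => rfl), Finset.sup'_union h1 h2,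
    Finset.sup'_image, Finset.sup'_congr h2.of_image rfl key,
    sup'_add_const]

/-- The bumped analogue of `qrel_insert`. -/
theorem qrel_bump_insert (G : WGraph V) {K : V → ℤ} (hK : G.IsChar K) {v : V}
    {s : Finset V} (hv : v ∉ s) (i : ℤ) :
    (G.bump v).qrel (Function.update K v (K v + (2 * i + 1))) (insert v s) =
      max (G.qrel K s)
        (G.qdiff K (eVec ({v} : Finset V))
          + G.qrel (G.chAdd K (eVec ({v} : Finset V))) s - (i + 1)) := by
  unfold qrel
  have hps : (insert v s).powerset = s.powerset ∪ s.powerset.image (insert v) :=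
    Finset.powerset_insert s v
  have h1 : s.powerset.Nonempty := Finset.powerset_nonempty s
  have h2 : (s.powerset.image (insert v)).Nonempty := h1.image _
  have key : ∀ T ∈ s.powerset,
      ((fun T => (G.bump v).qdiff (Function.update K v (K v + (2 * i + 1))) (eVec T))
        ∘ insert v) T
      = G.qdiff K (eVec ({v} : Finset V))
          + G.qdiff (G.chAdd K (eVec ({v} : Finset V))) (eVec T) - (i + 1) := by
    intro T hT
    have hvT : v ∉ T := fun hvt => hv ((Finset.mem_powerset.mp hT) hvt)
    rw [Function.comp_apply, G.qdiff_bump_mem hK v i (Finset.mem_insert_self v T),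
      G.qdiff_insert hK hvT]
  rw [Finset.sup'_congr _ hps (fun _ _ => rfl), Finset.sup'_union h1 h2,
    Finset.sup'_image, Finset.sup'_congr h2.of_image rfl key, sup'_shift,
    Finset.sup'_congr h1 rfl
      (fun T hT => G.qdiff_bump_notMem K v i
        (fun hvt => hv ((Finset.mem_powerset.mp hT) hvt)))]


end WGraph

end AuxLemmas

/-- If `v ∈ S` and `r = r((K,t),S)`, then `c(i,(K,t),S)` equals:
`i(i+1)/2` if `r ≥ max{0, −(i+1)}`; `(i+1)(i+2)/2` if `r ≤ min{0, −(i+1)}`;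
`(i+1)(i+2)/2 + r` if `0 ≤ r ≤ −(i+1)`; and `i(i+1)/2 − r` if `−(i+1) ≤ r ≤ 0`. -/
theorem cExp_cases (G : WGraph V) (v : V) (K : G.Ch) (S : Finset V) (hv : v ∈ S) (i : ℤ) :
    (max 0 (-(i + 1)) ≤ rVal G v K S → cExp G v i K S = i * (i + 1) / 2) ∧
    (rVal G v K S ≤ min 0 (-(i + 1)) → cExp G v i K S = (i + 1) * (i + 2) / 2) ∧
    (0 ≤ rVal G v K S ∧ rVal G v K S ≤ -(i + 1) →
      cExp G v i K S = (i + 1) * (i + 2) / 2 + rVal G v K S) ∧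
    (-(i + 1) ≤ rVal G v K S ∧ rVal G v K S ≤ 0 →
      cExp G v i K S = i * (i + 1) / 2 - rVal G v K S) := by
  classical
  have hK := K.2
  set s := S.erase v with hs
  have hvs : v ∉ s := Finset.notMem_erase v S
  have hS : insert v s = S := Finset.insert_erase hv
  set a := G.qrel K.1 s with hadef
  set b := G.qdiff K.1 (eVec ({v} : Finset V))
      + G.qrel (G.chAdd K.1 (eVec ({v} : Finset V))) s with hbdef
  have hr : rVal G v K S = a - b := by
    unfold rVal; rw [← hs, ← hadef, ← hbdef]
  have hq1 : G.qrel K.1 S = max a b := by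
    rw [← hS]; exact G.qrel_insert hK hvs
  have hq2 : (G.bump v).qrel (K.bumpSh v i).1 S = max a (b - (i + 1)) := by
    rw [← hS]; exact G.qrel_bump_insert hK hvs i
  have hc : cExp G v i K S = max a b - max a (b - (i + 1)) + i * (i + 1) / 2 := by
    unfold cExp; rw [hq1, hq2]
  obtain ⟨k, hk⟩ := Int.even_mul_succ_self i
  have hq : (i + 1) * (i + 2) = i * (i + 1) + 2 * (i + 1) := by ring
  rw [hr, hc]
  rcases max_cases a b with ⟨h1, h2⟩ | ⟨h1, h2⟩ <;>
    rcases max_cases a (b - (i + 1)) with ⟨h3, h4⟩ | ⟨h3, h4⟩ <;>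
    rw [h1, h3] <;>
    refine ⟨fun h => ?_, fun h => ?_, fun h => ?_, fun h => ?_⟩ <;>
    (try simp only [max_le_iff, le_min_iff] at h) <;>
    omega


end
end
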